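/- The series sum over k≥1 of 1/(2^(k+1)·(2k-1)·k·(2k+1)) equals (3/(2√2))·ln(1+√2) - (1/2)(ln(2)+1). -/

import Mathlib

open Real

theorem stmt_9 :
    ∑' k : ℕ, 1 / (2 ^ (k + 2) * (2 * (k : ℝ) + 1) * (k + 1) * (2 * k + 3)) =
      (3 / (2 * Real.sqrt 2)) * Real.log (1 + Real.sqrt 2) - (1 / 2) * (Real.log 2 + 1) := by
  set s := Real.sqrt 2 with hs
  have hs2 : s * s = 2 := Real.mul_self_sqrt (by norm_num)
  have hs_pos : (0 : ℝ) < s := Real.sqrt_pos.mpr (by norm_num)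
  have hs_lt : s < 2 := by nlinarith
  set x : ℝ := s / 2 with hx
  have hx_pos : 0 < x := by positivity
  have hx_lt : x < 1 := by rw [hx]; linarith
  have habs : |x| < 1 := by rw [abs_of_pos hx_pos]; exact hx_lt
  have hx2 : x ^ 2 = 1 / 2 := by rw [hx]; nlinarith
  -- the three HasSum facts
  have hA := hasSum_log_sub_log_of_abs_lt_one habs
  have hB := hasSum_pow_div_log_of_abs_lt_one (x := 1/2) (by rw [abs_of_pos]; norm_num; norm_num)
  -- L = log(1+x) - log(1-x) = 2 log (1+s)
  have hL : Real.log (1 + x) - Real.log (1 - x) = 2 * Real.log (1 + s) := by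
    have h1 : (1 : ℝ) + x = (1 - x) * (1 + s) ^ 2 := by rw [hx]; nlinarith
    have h2 : (0 : ℝ) < 1 - x := by linarith
    have h3 : (0 : ℝ) < 1 + s := by linarith
    rw [h1, Real.log_mul (ne_of_gt h2) (by positivity), Real.log_pow]
    push_cast
    ring
  rw [hL] at hA
  -- shifted version for series C
  have hC := (hasSum_nat_add_iff' (f := fun k : ℕ => (2 : ℝ) * (1 / (2 * k + 1)) * x ^ (2 * k + 1)) 1).mpr hA
  have hf0 : ∑ i ∈ Finset.range 1, (2 : ℝ) * (1 / (2 * (i:ℕ) + 1)) * x ^ (2 * (i:ℕ) + 1) = 2 * x := by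
    simp
  rw [hf0] at hC
  have hs2' : s ^ 2 = 2 := by nlinarith
  have hBlog : -Real.log (1 - 1/2) = Real.log 2 := by
    rw [show (1:ℝ) - 1/2 = 2⁻¹ by norm_num, Real.log_inv]; ring
  rw [hBlog] at hB
  -- combine: total = (s/8) * A - (1/2) * B + (s/4) * C
  have hT := ((hA.mul_left (s/8)).sub (hB.mul_left (1/2))).add (hC.mul_left (s/4))
  have hxpow : ∀ k : ℕ, x ^ (2 * k + 1) = (1/2) ^ k * x := by
    intro k
    rw [pow_add, pow_mul, hx2, pow_one]
  have hfun : (fun k : ℕ => s/8 * ((2 : ℝ) * (1 / (2 * k + 1)) * x ^ (2 * k + 1))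
        - 1/2 * ((1/2 : ℝ) ^ (k + 1) / (k + 1))
        + s/4 * ((2 : ℝ) * (1 / (2 * ((k : ℕ) + 1 : ℕ) + 1)) * x ^ (2 * ((k : ℕ) + 1 : ℕ) + 1)))
      = fun k : ℕ => 1 / (2 ^ (k + 2) * (2 * (k : ℝ) + 1) * (k + 1) * (2 * k + 3)) := by
    funext k
    have h1 : (0:ℝ) < 2 * (k:ℝ) + 1 := by positivity
    have h2 : (0:ℝ) < (k:ℝ) + 1 := by positivity
    have h3 : (0:ℝ) < 2 * (k:ℝ) + 3 := by positivity
    have h4 : ((1:ℝ)/2) ^ k ≠ 0 := by positivity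
    rw [hxpow, hxpow]
    push_cast
    rw [hx]
    have h2k : (2:ℝ)^(k+2) = 4 / ((1/2:ℝ)^k) := by
      rw [pow_add]; field_simp [pow_eq_zero_iff]; rw [mul_right_comm, ← mul_pow]; norm_num
    rw [h2k]
    field_simp
    ring_nf
    simp only [hs2']
    ring
  rw [hfun] at hT
  rw [hT.tsum_eq]
  have h32 : 3 / (2 * s) = 3 * s / 4 := by
    rw [div_eq_div_iff (by positivity) (by norm_num)]; nlinarith
  rw [h32]
  linear_combination (-1/4 : ℝ) * hs2
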